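/- Let U be a finite set with n = |U|, let T₁,…,Tₘ be nonempty subsets of U, and let r be a new vertex not in U. Form the graph G on vertex set U ∪ {r} whose edges are all pairs within U (each of weight 1) together with edges {r,u} for each u ∈ U (each of weight n³). Let the required vertex subsets be S_{i,j} = {uᵢ,uⱼ} for all pairs i < j, and S'ᵢ = Tᵢ ∪ {r} for each i. Then the minimum weight h of an edge set F ⊆ E(G) containing a spanning tree of the induced subgraph on each required subset equals h'·n³ + C(n,2), where h' is the minimum cardinality of a set C ⊆ U intersecting every Tᵢ. -/

import Mathlib

lemma aux_exists_adj_of_reachable {V : Type*} {G : SimpleGraph V} {a b : V}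
    (h : G.Reachable a b) (hne : a ≠ b) : ∃ c, G.Adj a c := by
  obtain ⟨p⟩ := h
  cases p with
  | nil => exact absurd rfl hne
  | cons h _ => exact ⟨_, h⟩

lemma aux_connected_of_hub {V : Type*} (G : SimpleGraph V) (S : Set V) (c : V) (hc : c ∈ S)
    (h : ∀ a ∈ S, a = c ∨ G.Adj a c) : (G.induce S).Connected := by
  rw [SimpleGraph.connected_iff]
  refine ⟨?_, ⟨⟨c, hc⟩⟩⟩
  have key : ∀ a : S, (G.induce S).Reachable a ⟨c, hc⟩ := by
    intro a
    rcases h a.val a.property with h1 | h1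
    · subst h1; exact SimpleGraph.Reachable.refl _
    · exact SimpleGraph.Adj.reachable (by exact h1)
  intro a b
  exact (key a).trans (key b).symm

/-- In the weighted reduction from Min Hitting Set, the minimum weight `h` of a
spanning-tree hitting set equals `h' * n^3 + C(n,2)`, where `h'` is the minimum cardinality
of a hitting set for the family `T₁, …, Tₘ`. -/
theorem min_spanning_tree_hitting_set_weight
    {V : Type} [Fintype V] [DecidableEq V]
    (U : Finset V) (r : V) (hr : r ∉ U)
    (n : ℕ) (hn : n = U.card)
    (m : ℕ) (T : Fin m → Finset V)
    (hTsub : ∀ i, T i ⊆ U) (hTne : ∀ i, (T i).Nonempty)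
    -- the complete graph `K_U` on `U` and the star edges at `r`
    (KU Star : Finset (Sym2 V))
    (hKU : KU = ((U ×ˢ U).filter (fun p => p.1 ≠ p.2)).image (fun p => s(p.1, p.2)))
    (hStar : Star = U.image (fun u => s(r, u)))
    -- edge weights: `n^3` on edges incident with `r`, and `1` on edges within `U`
    (wt : Sym2 V → ℕ) (hwt : ∀ e, wt e = if r ∈ e then n ^ 3 else 1)
    -- `Conn F S` : `F` contains a spanning tree of the subgraph induced on `S`
    (Conn : Finset (Sym2 V) → Set V → Prop)
    (hConn : ∀ F S, Conn F S ↔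
      ((SimpleGraph.fromEdgeSet (↑F : Set (Sym2 V))).induce S).Connected)
    -- `STHS F` : `F` is a spanning-tree hitting set for all required subsets
    (STHS : Finset (Sym2 V) → Prop)
    (hSTHS : ∀ F, STHS F ↔ (F ⊆ KU ∪ Star ∧
      (∀ u ∈ U, ∀ v ∈ U, u ≠ v → Conn F {u, v}) ∧
      (∀ i : Fin m, Conn F ((↑(T i) : Set V) ∪ {r})))) :
    sInf {w : ℕ | ∃ F, STHS F ∧ w = ∑ e ∈ F, wt e}
      = (sInf {c : ℕ | ∃ C : Finset V, C ⊆ U ∧ (∀ i, (T i ∩ C).Nonempty) ∧ c = C.card})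
          * n ^ 3 + n.choose 2 := by
  -- basic membership facts
  have hmemKU : ∀ a ∈ U, ∀ b ∈ U, a ≠ b → s(a, b) ∈ KU := by
    intro a ha b hb hab
    rw [hKU]
    exact Finset.mem_image.mpr ⟨(a, b), by simp [Finset.mem_filter, ha, hb, hab], rfl⟩
  have hrKU : ∀ e ∈ KU, r ∉ e := by
    intro e he
    rw [hKU] at he
    obtain ⟨p, hp, rfl⟩ := Finset.mem_image.mp he
    simp only [Finset.mem_filter, Finset.mem_product] at hp
    intro hre
    rcases Sym2.mem_iff.mp hre with h1 | h1 <;> subst h1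
    · exact hr hp.1.1
    · exact hr hp.1.2
  have hrStar : ∀ e ∈ Star, r ∈ e := by
    intro e he
    rw [hStar] at he
    obtain ⟨u, _, rfl⟩ := Finset.mem_image.mp he
    exact Sym2.mem_mk_left r u
  have hdisj : Disjoint KU Star := by
    rw [Finset.disjoint_left]
    intro e he1 he2
    exact hrKU e he1 (hrStar e he2)
  have hKUcard : KU.card = n.choose 2 := by
    have h1 : KU = U.offDiag.image Sym2.mk.uncurry := by
      rw [hKU]
      have heq : (U ×ˢ U).filter (fun p => p.1 ≠ p.2) = U.offDiag := by
        ext p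
        simp [Finset.mem_offDiag, and_assoc]
      rw [heq]
      rfl
    rw [h1, Sym2.card_image_offDiag, hn]
  -- injectivity of star edges
  have hstarinj : Set.InjOn (fun u => s(r, u)) ↑U := by
    intro a _ b _ hab
    exact Sym2.congr_right.mp hab
  -- weight of an F ⊆ KU ∪ Star
  have hsum : ∀ F : Finset (Sym2 V), F ⊆ KU ∪ Star →
      ∑ e ∈ F, wt e = (F ∩ KU).card + (F ∩ Star).card * n ^ 3 := by
    intro F hF
    have hd : Disjoint (F ∩ KU) (F ∩ Star) :=
      hdisj.mono Finset.inter_subset_right Finset.inter_subset_right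
    have hu : (F ∩ KU) ∪ (F ∩ Star) = F := by
      rw [← Finset.inter_union_distrib_left]
      exact Finset.inter_eq_left.mpr hF
    conv_lhs => rw [← hu]
    rw [Finset.sum_union hd]
    congr 1
    · rw [Finset.card_eq_sum_ones]
      refine Finset.sum_congr rfl fun e he => ?_
      rw [hwt e, if_neg (hrKU e (Finset.mem_inter.mp he).2)]
    · rw [show (F ∩ Star).card * n ^ 3 = ∑ _e ∈ F ∩ Star, n ^ 3 by
        rw [Finset.sum_const, smul_eq_mul]]
      refine Finset.sum_congr rfl fun e he => ?_
      rw [hwt e, if_pos (hrStar e (Finset.mem_inter.mp he).2)]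
  -- the hitting-set side
  set B : Set ℕ := {c : ℕ | ∃ C : Finset V, C ⊆ U ∧ (∀ i, (T i ∩ C).Nonempty) ∧ c = C.card}
    with hB
  have hBne : B.Nonempty := by
    refine ⟨U.card, U, subset_rfl, fun i => ?_, rfl⟩
    rw [Finset.inter_eq_left.mpr (hTsub i)]
    exact hTne i
  obtain ⟨C₀, hC₀U, hC₀hit, hC₀card⟩ := Nat.sInf_mem hBne
  -- the optimal spanning-tree hitting set
  set F₀ : Finset (Sym2 V) := KU ∪ C₀.image (fun u => s(r, u)) with hF₀
  have himgStar : C₀.image (fun u => s(r, u)) ⊆ Star := by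
    rw [hStar]; exact Finset.image_subset_image hC₀U
  have hF₀sub : F₀ ⊆ KU ∪ Star := Finset.union_subset_union subset_rfl himgStar
  have hSTHSF₀ : STHS F₀ := by
    rw [hSTHS]
    refine ⟨hF₀sub, ?_, ?_⟩
    · intro u hu v hv huv
      rw [hConn]
      refine aux_connected_of_hub _ _ v (by simp) ?_
      intro a ha
      rcases ha with rfl | ha
      · right
        rw [SimpleGraph.fromEdgeSet_adj]
        exact ⟨Finset.subset_union_left (hmemKU a hu v hv huv), huv⟩
      · left; exact ha
    · intro i
      rw [hConn]
      obtain ⟨c, hc⟩ := hC₀hit i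
      rw [Finset.mem_inter] at hc
      have hcU : c ∈ U := hTsub i hc.1
      refine aux_connected_of_hub _ _ c (Or.inl hc.1) ?_
      intro a ha
      rcases ha with ha | rfl
      · by_cases hac : a = c
        · left; exact hac
        · right
          rw [SimpleGraph.fromEdgeSet_adj]
          exact ⟨Finset.subset_union_left (hmemKU a (hTsub i ha) c hcU hac), hac⟩
      · right
        rw [SimpleGraph.fromEdgeSet_adj]
        refine ⟨Finset.subset_union_right ?_, fun h => hr (h ▸ hcU)⟩
        exact Finset.mem_image_of_mem _ hc.2
  have hF₀wt : ∑ e ∈ F₀, wt e = sInf B * n ^ 3 + n.choose 2 := by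
    rw [hsum F₀ hF₀sub]
    have h1 : F₀ ∩ KU = KU := Finset.inter_eq_right.mpr Finset.subset_union_left
    have h2 : F₀ ∩ Star = C₀.image (fun u => s(r, u)) := by
      rw [hF₀, Finset.union_inter_distrib_right,
        Finset.inter_eq_left.mpr himgStar,
        Finset.disjoint_iff_inter_eq_empty.mp hdisj, Finset.empty_union]
    rw [h1, h2, hKUcard, Finset.card_image_of_injOn (hstarinj.mono (by exact_mod_cast hC₀U)),
      ← hC₀card]
    omega
  -- lower bound for any STHS
  have hlow : ∀ w ∈ {w : ℕ | ∃ F, STHS F ∧ w = ∑ e ∈ F, wt e},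
      sInf B * n ^ 3 + n.choose 2 ≤ w := by
    rintro w ⟨F, hF, rfl⟩
    rw [hSTHS] at hF
    obtain ⟨hFsub, hpair, hTconn⟩ := hF
    -- F contains all of KU
    have hKUF : KU ⊆ F := by
      intro e he
      rw [hKU] at he
      obtain ⟨p, hp, rfl⟩ := Finset.mem_image.mp he
      simp only [Finset.mem_filter, Finset.mem_product] at hp
      obtain ⟨⟨ha, hb⟩, hab⟩ := hp
      have hc := (hConn F _).mp (hpair p.1 ha p.2 hb hab)
      have hmem1 : p.1 ∈ ({p.1, p.2} : Set V) := by simp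
      have hmem2 : p.2 ∈ ({p.1, p.2} : Set V) := by simp
      have hre := hc.preconnected ⟨p.1, hmem1⟩ ⟨p.2, hmem2⟩
      obtain ⟨c, hadj⟩ := aux_exists_adj_of_reachable hre (fun h => hab (congrArg Subtype.val h))
      have hadj' : (SimpleGraph.fromEdgeSet (↑F : Set (Sym2 V))).Adj p.1 c.val := hadj
      rw [SimpleGraph.fromEdgeSet_adj] at hadj'
      have : c.val = p.2 := by
        rcases c.property with h | h
        · exact absurd h.symm hadj'.2
        · exact h
      rw [← this]
      exact_mod_cast hadj'.1
    -- the hitting set extracted from F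
    set CF : Finset V := U.filter (fun u => s(r, u) ∈ F) with hCF
    have hCFhit : ∀ i, (T i ∩ CF).Nonempty := by
      intro i
      have hc := (hConn F _).mp (hTconn i)
      obtain ⟨t, ht⟩ := hTne i
      have hrS : r ∈ (↑(T i) : Set V) ∪ {r} := Or.inr rfl
      have htS : t ∈ (↑(T i) : Set V) ∪ {r} := Or.inl (by exact_mod_cast ht)
      have hrt : r ≠ t := fun h => hr (h ▸ hTsub i ht)
      have hre := hc.preconnected ⟨r, hrS⟩ ⟨t, htS⟩
      obtain ⟨c, hadj⟩ := aux_exists_adj_of_reachable hre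
        (fun h => hrt (congrArg Subtype.val h))
      have hadj' : (SimpleGraph.fromEdgeSet (↑F : Set (Sym2 V))).Adj r c.val := hadj
      rw [SimpleGraph.fromEdgeSet_adj] at hadj'
      have hcT : c.val ∈ T i := by
        rcases c.property with h | h
        · exact_mod_cast h
        · exact absurd h.symm hadj'.2
      refine ⟨c.val, Finset.mem_inter.mpr ⟨hcT, ?_⟩⟩
      rw [hCF, Finset.mem_filter]
      exact ⟨hTsub i hcT, by exact_mod_cast hadj'.1⟩
    have hBle : sInf B ≤ CF.card :=
      Nat.sInf_le ⟨CF, Finset.filter_subset _ _, hCFhit, rfl⟩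
    -- count star edges of F
    have hFstar : F ∩ Star = CF.image (fun u => s(r, u)) := by
      ext e
      simp only [Finset.mem_inter, Finset.mem_image, hCF, Finset.mem_filter, hStar]
      constructor
      · rintro ⟨heF, u, hu, rfl⟩
        exact ⟨u, ⟨hu, heF⟩, rfl⟩
      · rintro ⟨u, ⟨huU, huF⟩, rfl⟩
        exact ⟨huF, u, huU, rfl⟩
    have hcardstar : (F ∩ Star).card = CF.card := by
      rw [hFstar]
      exact Finset.card_image_of_injOn (hstarinj.mono
        (by exact_mod_cast Finset.filter_subset _ _))
    rw [hsum F hFsub, Finset.inter_eq_right.mpr hKUF, hKUcard, hcardstar]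
    have hmul := Nat.mul_le_mul_right (n ^ 3) hBle
    omega
  refine le_antisymm (Nat.sInf_le ⟨F₀, hSTHSF₀, hF₀wt.symm⟩) ?_
  exact le_csInf ⟨_, F₀, hSTHSF₀, hF₀wt.symm⟩ hlow
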